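/- Let f : ℕ → ℕ and let G be a finite graph admitting a connected f-flat decomposition of width k. Then for every r ∈ ℕ, wcol_r(G) ≤ C(r+k, k)·f(r). -/

import Mathlib

set_option linter.unusedSectionVars false
set_option maxHeartbeats 1000000


open SimpleGraph

variable {V : Type} [Fintype V]

/-- The vertex sets `H 0, …, H (ℓ-1)` form a partition of `V`. -/
def IsDecomp {ℓ : ℕ} (H : Fin ℓ → Set V) : Prop :=
  (∀ i, (H i).Nonempty) ∧ (∀ i j, i ≠ j → Disjoint (H i) (H j)) ∧ (∀ v : V, ∃ i, v ∈ H i)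

/-- The union of the parts strictly before `i`. -/
def before {ℓ : ℕ} (H : Fin ℓ → Set V) (i : Fin ℓ) : Set V :=
  {v | ∃ j, j < i ∧ v ∈ H j}

/-- `C` is a (connected) component of `G − U`. -/
def IsCompOf (G : SimpleGraph V) (U C : Set V) : Prop :=
  C.Nonempty ∧ Disjoint C U ∧ (G.induce C).Connected ∧
    ∀ u ∈ C, ∀ v : V, v ∉ U → G.Adj u v → v ∈ C

/-- There is an edge of `G` between `A` and `C`. -/
def LinkedTo (G : SimpleGraph V) (A C : Set V) : Prop :=
  ∃ u ∈ A, ∃ v ∈ C, G.Adj u v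

/-- The decomposition has width at most `k`: for every `i` and every component
`C` of `G` minus the parts before `i`, at most `k` of the earlier parts have an
edge to `C`. -/
def WidthLE (G : SimpleGraph V) {ℓ : ℕ} (H : Fin ℓ → Set V) (k : ℕ) : Prop :=
  ∀ i : Fin ℓ, ∀ C : Set V, IsCompOf G (before H i) C →
    {j : Fin ℓ | j < i ∧ LinkedTo G (H j) C}.ncard ≤ k

/-- The decomposition is `f`-flat: each part `H i` `f`-spreads on the graph
obtained by deleting the earlier parts, i.e. for every `r` and every vertex `v`
outside the earlier parts, at most `f r` vertices of `H i` are reachable from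
`v` by a walk of length at most `r` avoiding the earlier parts. -/
def IsFlat (G : SimpleGraph V) {ℓ : ℕ} (H : Fin ℓ → Set V) (f : ℕ → ℕ) : Prop :=
  ∀ i : Fin ℓ, ∀ r : ℕ, ∀ v : V, v ∉ before H i →
    {u | u ∈ H i ∧ ∃ p : G.Walk v u, p.length ≤ r ∧
      ∀ w ∈ p.support, w ∉ before H i}.ncard ≤ f r

/-- Every part induces a connected subgraph. -/
def IsConnectedDecomp (G : SimpleGraph V) {ℓ : ℕ} (H : Fin ℓ → Set V) : Prop :=
  ∀ i, (G.induce (H i)).Connected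

/-- `P` is the vertex set of an isometric path of `G` inside `S`: a path whose
support lies in `S` and which is a shortest among all walks in `S` between its
endpoints. -/
def IsIsomPathIn (G : SimpleGraph V) (S P : Set V) : Prop :=
  ∃ (x y : V) (p : G.Walk x y), p.IsPath ∧ (∀ w ∈ p.support, w ∈ S) ∧
    P = {w | w ∈ p.support} ∧
    ∀ q : G.Walk x y, (∀ w ∈ q.support, w ∈ S) → p.length ≤ q.length

/-- The set of vertices weakly `r`-reachable from `v` with respect to `L`. -/
def WReach (G : SimpleGraph V) (L : LinearOrder V) (r : ℕ) (v : V) : Set V :=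
  {u | ∃ p : G.Walk v u, p.IsPath ∧ p.length ≤ r ∧ ∀ w ∈ p.support, L.le u w}

/-- The weak `r`-colouring number. -/
noncomputable def wcol (G : SimpleGraph V) (r : ℕ) : ℕ :=
  sInf {k | ∃ L : LinearOrder V, ∀ v, (WReach G L r v).ncard ≤ k}


section AuxDev

variable {ℓ : ℕ} {H : Fin ℓ → Set V} {G : SimpleGraph V} {k : ℕ}

/-- index of the part containing `v` -/
noncomputable def pidx (hdec : IsDecomp H) (v : V) : Fin ℓ := (hdec.2.2 v).choose

lemma mem_pidx (hdec : IsDecomp H) (v : V) : v ∈ H (pidx hdec v) := (hdec.2.2 v).choose_spec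

lemma pidx_eq (hdec : IsDecomp H) {v : V} {i : Fin ℓ} (h : v ∈ H i) : pidx hdec v = i := by
  by_contra hne
  exact Set.disjoint_left.mp (hdec.2.1 _ _ hne) (mem_pidx hdec v) h

lemma mem_before_iff (hdec : IsDecomp H) {v : V} {i : Fin ℓ} :
    v ∈ before H i ↔ pidx hdec v < i := by
  constructor
  · rintro ⟨j, hj, hv⟩; rwa [pidx_eq hdec hv]
  · intro h; exact ⟨pidx hdec v, h, mem_pidx hdec v⟩

lemma before_mono {i j : Fin ℓ} (h : i ≤ j) : before H i ⊆ before H j := by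
  rintro v ⟨m, hm, hv⟩; exact ⟨m, lt_of_lt_of_le hm h, hv⟩

/-- vertices reachable from `v` by walks avoiding `before H t` -/
def Dset (G : SimpleGraph V) (H : Fin ℓ → Set V) (v : V) (t : Fin ℓ) : Set V :=
  {w | ∃ p : G.Walk v w, ∀ x ∈ p.support, x ∉ before H t}

lemma base_mem_Dset {v : V} {t : Fin ℓ} (h : v ∉ before H t) : v ∈ Dset G H v t :=
  ⟨Walk.nil, by simp [h]⟩

lemma Dset_not_before {v w : V} {t : Fin ℓ} (h : w ∈ Dset G H v t) : w ∉ before H t := by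
  obtain ⟨p, hp⟩ := h; exact hp w p.end_mem_support

lemma Dset_eq_empty {v : V} {t : Fin ℓ} (h : v ∈ before H t) : Dset G H v t = ∅ := by
  ext w; simp only [Set.mem_empty_iff_false, iff_false]
  rintro ⟨p, hp⟩; exact hp v p.start_mem_support h

lemma Dset_closed {v w x : V} {t : Fin ℓ} (hw : w ∈ Dset G H v t) (hx : x ∉ before H t)
    (hadj : G.Adj w x) : x ∈ Dset G H v t := by
  obtain ⟨p, hp⟩ := hw
  refine ⟨p.concat hadj, ?_⟩
  intro y hy
  rw [Walk.support_concat] at hy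
  rw [List.mem_append] at hy
  rcases hy with hy | hy
  · exact hp y hy
  · rw [List.mem_singleton] at hy; subst hy; exact hx

lemma Dset_mono {v : V} {s t : Fin ℓ} (h : s ≤ t) : Dset G H v t ⊆ Dset G H v s := by
  rintro w ⟨p, hp⟩
  exact ⟨p, fun x hx hxs => hp x hx (before_mono h hxs)⟩

lemma reach_induce {S : Set V} :
    ∀ {a b : V} (p : G.Walk a b) (hp : ∀ x ∈ p.support, x ∈ S),
    (G.induce S).Reachable ⟨a, hp a p.start_mem_support⟩ ⟨b, hp b p.end_mem_support⟩ := by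
  intro a b p
  induction p with
  | nil => intro _; exact Reachable.refl _
  | @cons a c b h q ih =>
    intro hp
    have ha : a ∈ S := hp a (by simp)
    have hc : c ∈ S := hp c (by simp)
    have hadj : (G.induce S).Adj ⟨a, ha⟩ ⟨c, hc⟩ := h
    exact (hadj.reachable).trans (ih fun x hx => hp x (by simp [hx]))

lemma mem_support_mem_Dset {v w x : V} {t : Fin ℓ} (p : G.Walk v w)
    (hp : ∀ y ∈ p.support, y ∉ before H t) (hx : x ∈ p.support) : x ∈ Dset G H v t := by
  classical
  exact ⟨p.takeUntil x hx, fun y hy => hp y (Walk.support_takeUntil_subset _ _ hy)⟩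

lemma Dset_compOf {v : V} {t : Fin ℓ} (hv : v ∉ before H t) :
    IsCompOf G (before H t) (Dset G H v t) := by
  refine ⟨⟨v, base_mem_Dset hv⟩, Set.disjoint_left.mpr fun w hw => Dset_not_before hw, ?_, ?_⟩
  · have key : ∀ w (hw : w ∈ Dset G H v t),
        (G.induce (Dset G H v t)).Reachable ⟨v, base_mem_Dset hv⟩ ⟨w, hw⟩ := by
      intro w hw
      obtain ⟨p, hp⟩ := hw
      exact reach_induce p (fun x hx => mem_support_mem_Dset p hp hx)
    rw [connected_iff]
    refine ⟨fun a b => ((key a a.2).symm.trans (key b b.2)), ⟨⟨v, base_mem_Dset hv⟩⟩⟩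
  · intro u hu x hx hadj; exact Dset_closed hu hx hadj

open Classical in
/-- the earlier parts linked to the component of `v` -/
noncomputable def Lv (G : SimpleGraph V) (H : Fin ℓ → Set V) (v : V) (t : Fin ℓ) :
    Finset (Fin ℓ) :=
  Finset.univ.filter (fun j => j < t ∧ LinkedTo G (H j) (Dset G H v t))

lemma Lv_lt {v : V} {s t : Fin ℓ} (h : s ∈ Lv G H v t) : s < t := by
  classical
  simp only [Lv, Finset.mem_filter] at h
  exact h.2.1

lemma Lv_linked {v : V} {s t : Fin ℓ} (h : s ∈ Lv G H v t) :
    LinkedTo G (H s) (Dset G H v t) := by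
  classical
  simp only [Lv, Finset.mem_filter] at h
  exact h.2.2

lemma mem_Lv {v : V} {s t : Fin ℓ} (h1 : s < t) (h2 : LinkedTo G (H s) (Dset G H v t)) :
    s ∈ Lv G H v t := by
  classical
  simp only [Lv, Finset.mem_filter]
  exact ⟨Finset.mem_univ _, h1, h2⟩

lemma Lv_card (hw : WidthLE G H k) (v : V) (t : Fin ℓ) : (Lv G H v t).card ≤ k := by
  classical
  by_cases hv : v ∈ before H t
  · have : Lv G H v t = ∅ := by
      ext j
      simp only [Lv, Finset.mem_filter, Finset.notMem_empty, iff_false, not_and]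
      rintro _ _ ⟨u, _, w, hw', _⟩
      rw [Dset_eq_empty hv] at hw'
      exact hw'
    simp [this]
  · have h1 := hw t (Dset G H v t) (Dset_compOf hv)
    have h2 : {j : Fin ℓ | j < t ∧ LinkedTo G (H j) (Dset G H v t)} = ↑(Lv G H v t) := by
      ext j; simp [Lv]
    rw [h2, Set.ncard_coe_finset] at h1
    exact h1

lemma Lv_nest {v : V} {x s t : Fin ℓ} (hx : x ∈ Lv G H v t) (hs : s ∈ Lv G H v t)
    (hxs : x < s) : x ∈ Lv G H v s := by
  obtain ⟨a, ha, b, hb, hab⟩ := Lv_linked hx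
  exact mem_Lv hxs ⟨a, ha, b, Dset_mono (le_of_lt (Lv_lt hs)) hb, hab⟩

/-- reachable part indices -/
noncomputable def Rv (G : SimpleGraph V) (H : Fin ℓ → Set V) (v : V) :
    ℕ → Fin ℓ → Finset (Fin ℓ)
  | 0, t => {t}
  | (ρ+1), t => insert t ((Lv G H v t).biUnion (Rv G H v ρ))

lemma self_mem_Rv {v : V} (ρ : ℕ) (t : Fin ℓ) : t ∈ Rv G H v ρ t := by
  cases ρ <;> simp [Rv]

lemma Rv_succ_mono {v : V} (ρ : ℕ) : ∀ t : Fin ℓ, Rv G H v ρ t ⊆ Rv G H v (ρ+1) t := by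
  induction ρ with
  | zero => intro t; simp [Rv]
  | succ ρ ih =>
    intro t
    simp only [Rv]
    exact Finset.insert_subset_insert _ (Finset.biUnion_mono (fun s _ => ih s))

lemma Rv_add_mono {v : V} (ρ : ℕ) : ∀ (d : ℕ) (t : Fin ℓ), Rv G H v ρ t ⊆ Rv G H v (ρ + d) t := by
  intro d
  induction d with
  | zero => exact fun t => subset_rfl
  | succ n ih => exact fun t => (ih t).trans (Rv_succ_mono (ρ + n) t)

lemma Rv_mono {v : V} {ρ ρ' : ℕ} (h : ρ ≤ ρ') (t : Fin ℓ) : Rv G H v ρ t ⊆ Rv G H v ρ' t := by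
  have : ρ' = ρ + (ρ' - ρ) := by omega
  rw [this]
  exact Rv_add_mono ρ (ρ' - ρ) t

lemma Rv_step {v : V} {s t : Fin ℓ} (ρ : ℕ) (h : s ∈ Lv G H v t) :
    Rv G H v ρ s ⊆ Rv G H v (ρ+1) t := by
  intro x hx
  simp only [Rv, Finset.mem_insert, Finset.mem_biUnion]
  exact Or.inr ⟨s, h, hx⟩

lemma Rv_le {v : V} : ∀ (ρ : ℕ) (t : Fin ℓ), ∀ j ∈ Rv G H v ρ t, j ≤ t := by
  intro ρ
  induction ρ with
  | zero => intro t j hj; simp [Rv] at hj; omega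
  | succ n ih =>
    intro t j hj
    simp only [Rv, Finset.mem_insert, Finset.mem_biUnion] at hj
    rcases hj with rfl | ⟨s, hs, hj⟩
    · exact le_refl _
    · exact le_of_lt (lt_of_le_of_lt (ih s j hj) (Lv_lt hs))

end AuxDev

lemma hockey (b : ℕ) : ∀ E : ℕ, ∑ m ∈ Finset.range (E+1), (b + m).choose m = (b + E + 1).choose E := by
  intro E
  induction E with
  | zero => simp
  | succ E ih =>
    rw [Finset.sum_range_succ, ih]
    have h : b + (E+1) + 1 = (b + E + 1) + 1 := by omega
    rw [h, Nat.choose_succ_succ (b + E + 1) E]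
    congr 1

/-- an injection of a finset into a larger finset of naturals -/
lemma exists_injOn_finset {α : Type*} [LinearOrder α] (W : Finset α) (A : Finset ℕ)
    (h : W.card ≤ A.card) :
    ∃ g : α → ℕ, Set.InjOn g ↑W ∧ ∀ x ∈ W, g x ∈ A := by
  classical
  refine ⟨fun x => if hx : x ∈ W then
    A.orderEmbOfFin rfl (Fin.castLE h ((W.orderIsoOfFin rfl).symm ⟨x, hx⟩)) else 0, ?_, ?_⟩
  · intro x hx y hy hxy
    simp only [Set.mem_setOf_eq, Finset.mem_coe] at hx hy
    dsimp only at hxy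
    rw [dif_pos hx, dif_pos hy] at hxy
    have h1 := (A.orderEmbOfFin rfl).injective hxy
    have h2 := Fin.castLE_injective h h1
    have h3 := (W.orderIsoOfFin rfl).symm.injective h2
    exact Subtype.ext_iff.mp h3
  · intro x hx
    dsimp only
    rw [dif_pos hx]
    exact Finset.orderEmbOfFin_mem _ _ _

section CountDev

variable {ℓ : ℕ} {H : Fin ℓ → Set V} {G : SimpleGraph V} {k : ℕ}

lemma count_aux (hw : WidthLE G H k) (v : V) :
    ∀ n : ℕ, ∀ X : Finset (Fin ℓ), (∀ x ∈ X, (x : ℕ) < n) → X.card ≤ k →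
      (∀ x ∈ X, ∀ y ∈ X, x < y → x ∈ Lv G H v y) → ∀ β : Fin ℓ → ℕ,
      ∃ e : Fin ℓ → ℕ, Set.InjOn e ↑X ∧ (∀ x ∈ X, e x ∈ Finset.Icc 1 k) ∧
        (X.biUnion fun s => Rv G H v (β s) s).card ≤ ∑ x ∈ X, (β x + e x).choose (e x) := by
  intro n
  induction n using Nat.strong_induction_on with
  | _ n IH =>
  intro X hXn hXcard hchain β
  rcases X.eq_empty_or_nonempty with rfl | hne
  · exact ⟨fun _ => 1, by simp, by simp, by simp⟩
  classical
  have hXpos : 1 ≤ X.card := Finset.card_pos.mpr hne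
  set s₁ := X.max' hne with hs₁def
  have hs₁X : s₁ ∈ X := X.max'_mem hne
  have hs₁n : (s₁ : ℕ) < n := hXn s₁ hs₁X
  set X' := X.erase s₁ with hX'def
  have hs₁X' : s₁ ∉ X' := Finset.notMem_erase _ _
  have hX'lt : ∀ x ∈ X', x < s₁ := fun x hx =>
    lt_of_le_of_ne (X.le_max' x (Finset.mem_of_mem_erase hx)) (Finset.ne_of_mem_erase hx)
  have hX'sub : X' ⊆ X := Finset.erase_subset _ _
  have hX'Y : ∀ x ∈ X', x ∈ Lv G H v s₁ := fun x hx =>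
    hchain x (hX'sub hx) s₁ hs₁X (hX'lt x hx)
  have hcardX' : X'.card + 1 = X.card := Finset.card_erase_add_one hs₁X
  have hXsplit : X = insert s₁ X' := (Finset.insert_erase hs₁X).symm
  rcases hb : β s₁ with _ | b
  · -- zero case
    obtain ⟨e', he'inj, he'mem, he'card⟩ := IH (s₁ : ℕ) hs₁n X'
      (fun x hx => hX'lt x hx)
      (le_trans (Finset.card_le_card hX'sub) hXcard)
      (fun x hx y hy hxy => hchain x (hX'sub hx) y (hX'sub hy) hxy) β
    have hfree : ((Finset.Icc 1 k) \ X'.image e').Nonempty := by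
      apply Finset.card_pos.mp
      have h1 : (X'.image e').card ≤ X'.card := Finset.card_image_le
      have h2 : (Finset.Icc 1 k).card = k := by simp
      have h3 := Finset.le_card_sdiff (X'.image e') (Finset.Icc 1 k)
      omega
    obtain ⟨c, hc⟩ := hfree
    have hcIcc : c ∈ Finset.Icc 1 k := (Finset.mem_sdiff.mp hc).1
    have hcnot : c ∉ X'.image e' := (Finset.mem_sdiff.mp hc).2
    refine ⟨fun x => if x = s₁ then c else e' x, ?_, ?_, ?_⟩
    · intro x hx y hy hxy
      simp only [Finset.mem_coe] at hx hy
      dsimp only at hxy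
      by_cases hxs : x = s₁ <;> by_cases hys : y = s₁
      · rw [hxs, hys]
      · rw [if_pos hxs, if_neg hys] at hxy
        exact absurd (Finset.mem_image_of_mem e' (Finset.mem_erase.mpr ⟨hys, hy⟩))
          (hxy ▸ hcnot)
      · rw [if_neg hxs, if_pos hys] at hxy
        exact absurd (Finset.mem_image_of_mem e' (Finset.mem_erase.mpr ⟨hxs, hx⟩))
          (hxy.symm ▸ hcnot)
      · rw [if_neg hxs, if_neg hys] at hxy
        exact he'inj (Finset.mem_coe.mpr (Finset.mem_erase.mpr ⟨hxs, hx⟩))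
          (Finset.mem_coe.mpr (Finset.mem_erase.mpr ⟨hys, hy⟩)) hxy
    · intro x hx
      dsimp only
      by_cases hxs : x = s₁
      · rw [if_pos hxs]; exact hcIcc
      · rw [if_neg hxs]; exact he'mem x (Finset.mem_erase.mpr ⟨hxs, hx⟩)
    · have h0 : Rv G H v (β s₁) s₁ = {s₁} := by rw [hb]; rfl
      have hUeq : X.biUnion (fun s => Rv G H v (β s) s)
          = {s₁} ∪ X'.biUnion (fun s => Rv G H v (β s) s) := by
        conv_lhs => rw [hXsplit, Finset.biUnion_insert]
        rw [h0]
      have hsum : ∑ x ∈ X, (β x + if x = s₁ then c else e' x).choose (if x = s₁ then c else e' x)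
          = (β s₁ + c).choose c + ∑ x ∈ X', (β x + e' x).choose (e' x) := by
        conv_lhs => rw [hXsplit]
        rw [Finset.sum_insert hs₁X']
        rw [if_pos rfl]
        congr 1
        refine Finset.sum_congr rfl (fun x hx => ?_)
        rw [if_neg (Finset.ne_of_mem_erase hx)]
      rw [hUeq, hsum, hb]
      have h5 : (0 + c).choose c = 1 := by rw [Nat.zero_add, Nat.choose_self]
      rw [h5]
      refine le_trans (Finset.card_union_le _ _) ?_
      rw [Finset.card_singleton]
      exact Nat.add_le_add_left he'card 1
  · -- succ case
    set Y := Lv G H v s₁ with hYdef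
    have hYlt : ∀ y ∈ Y, y < s₁ := fun y hy => Lv_lt hy
    set β' : Fin ℓ → ℕ := fun y => if y ∈ X' then max (β y) b else b with hβ'def
    have hβ'b : ∀ y : Fin ℓ, b ≤ β' y := by
      intro y
      by_cases h : y ∈ X'
      · rw [hβ'def]; dsimp only; rw [if_pos h]; exact le_max_right _ _
      · rw [hβ'def]; dsimp only; rw [if_neg h]
    have hβ'X' : ∀ x ∈ X', β x ≤ β' x := by
      intro x hx
      rw [hβ'def]; dsimp only; rw [if_pos hx]; exact le_max_left _ _
    obtain ⟨e', he'inj, he'mem, he'card⟩ := IH (s₁ : ℕ) hs₁n Y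
      (fun y hy => hYlt y hy)
      (Lv_card hw v s₁)
      (fun x hx y hy hxy => Lv_nest hx hy hxy) β'
    have hsub : X.biUnion (fun s => Rv G H v (β s) s)
        ⊆ insert s₁ (Y.biUnion fun y => Rv G H v (β' y) y) := by
      intro z hz
      rw [Finset.mem_biUnion] at hz
      obtain ⟨x, hx, hz⟩ := hz
      by_cases hxs : x = s₁
      · rw [hxs, hb] at hz
        rw [show Rv G H v (b+1) s₁ = insert s₁ ((Lv G H v s₁).biUnion (Rv G H v b)) from rfl] at hz
        rw [Finset.mem_insert] at hz
        rcases hz with rfl | hz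
        · exact Finset.mem_insert_self _ _
        · rw [Finset.mem_biUnion] at hz
          obtain ⟨y, hy, hz⟩ := hz
          exact Finset.mem_insert_of_mem (Finset.mem_biUnion.mpr
            ⟨y, hy, Rv_mono (hβ'b y) y hz⟩)
      · have hxX' : x ∈ X' := Finset.mem_erase.mpr ⟨hxs, hx⟩
        exact Finset.mem_insert_of_mem (Finset.mem_biUnion.mpr
          ⟨x, hX'Y x hxX', Rv_mono (hβ'X' x hxX') x hz⟩)
    have hcard1 : (X.biUnion fun s => Rv G H v (β s) s).card
        ≤ 1 + (Y.biUnion fun y => Rv G H v (β' y) y).card := by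
      refine le_trans (Finset.card_le_card hsub) ?_
      refine le_trans (Finset.card_insert_le _ _) ?_
      omega
    -- partition
    set P := X'.filter (fun y => b < β y) with hPdef
    set W := X' \ P with hWdef
    have hPX' : P ⊆ X' := Finset.filter_subset _ _
    have hPY : P ⊆ Y := fun y hy => hX'Y y (hPX' hy)
    have hWX' : W ⊆ X' := Finset.sdiff_subset
    have hPW : ∀ x ∈ W, x ∉ P := fun x hx => (Finset.mem_sdiff.mp hx).2
    have hβ'P : ∀ y ∈ P, β' y = β y := by
      intro y hy
      have h1 := (Finset.mem_filter.mp hy).2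
      rw [hβ'def]; dsimp only; rw [if_pos (hPX' hy)]
      omega
    have hβ'Q : ∀ y ∈ Y, y ∉ P → β' y = b := by
      intro y hy hyP
      by_cases h : y ∈ X'
      · have h2 : ¬ b < β y := fun hlt => hyP (Finset.mem_filter.mpr ⟨h, hlt⟩)
        rw [hβ'def]; dsimp only; rw [if_pos h]
        omega
      · rw [hβ'def]; dsimp only; rw [if_neg h]
    -- exponent for s₁
    have hPcard : P.card + 1 ≤ k := by
      have := Finset.card_le_card hPX'
      omega
    have hetne : ((Finset.Icc 1 k) \ P.image e').Nonempty := by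
      apply Finset.card_pos.mp
      have h1 : (P.image e').card ≤ P.card := Finset.card_image_le
      have h2 : (Finset.Icc 1 k).card = k := by simp
      have h3 := Finset.le_card_sdiff (P.image e') (Finset.Icc 1 k)
      omega
    set et := ((Finset.Icc 1 k) \ P.image e').max' hetne with hetdef
    have hetmem : et ∈ (Finset.Icc 1 k) \ P.image e' := Finset.max'_mem _ _
    have hetIcc : et ∈ Finset.Icc 1 k := (Finset.mem_sdiff.mp hetmem).1
    have hetnotP : et ∉ P.image e' := (Finset.mem_sdiff.mp hetmem).2
    have hQle : ∀ y ∈ Y, y ∉ P → e' y ≤ et := by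
      intro y hy hyP
      apply Finset.le_max'
      rw [Finset.mem_sdiff]
      refine ⟨he'mem y hy, ?_⟩
      rw [Finset.mem_image]
      rintro ⟨p, hp, hpe⟩
      exact hyP (he'inj (Finset.mem_coe.mpr (hPY hp)) (Finset.mem_coe.mpr hy) hpe ▸ hp)
    -- key inequality
    have hkey : 1 + ∑ y ∈ Y \ P, (b + e' y).choose (e' y) ≤ (b + 1 + et).choose et := by
      have h1 : (b + 1 + et).choose et = ∑ m ∈ Finset.range (et+1), (b + m).choose m := by
        rw [hockey]
        congr 1
        omega
      rw [h1]
      have h2 : ∑ y ∈ Y \ P, (b + e' y).choose (e' y)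
          = ∑ m ∈ (Y \ P).image e', (b + m).choose m := by
        rw [Finset.sum_image]
        intro x hx y hy hxy
        exact he'inj (Finset.mem_coe.mpr (Finset.sdiff_subset hx))
          (Finset.mem_coe.mpr (Finset.sdiff_subset hy)) hxy
      rw [h2]
      have h4 : (0 : ℕ) ∉ (Y \ P).image e' := by
        rw [Finset.mem_image]
        rintro ⟨y, hy, hy0⟩
        have := he'mem y (Finset.sdiff_subset hy)
        rw [Finset.mem_Icc] at this
        omega
      have h3 : insert 0 ((Y \ P).image e') ⊆ Finset.range (et + 1) := by
        intro m hm
        rw [Finset.mem_insert] at hm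
        rw [Finset.mem_range]
        rcases hm with rfl | hm
        · omega
        · rw [Finset.mem_image] at hm
          obtain ⟨y, hy, rfl⟩ := hm
          have h5 := hQle y (Finset.sdiff_subset hy) (Finset.mem_sdiff.mp hy).2
          omega
      calc 1 + ∑ m ∈ (Y \ P).image e', (b + m).choose m
          = ∑ m ∈ insert 0 ((Y \ P).image e'), (b + m).choose m := by
            rw [Finset.sum_insert h4]
            simp
        _ ≤ ∑ m ∈ Finset.range (et + 1), (b + m).choose m :=
            Finset.sum_le_sum_of_subset h3
    -- fresh exponents for W
    set A := (Finset.Icc 1 k) \ (insert et (P.image e')) with hAdef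
    have hWA : W.card ≤ A.card := by
      have h1 : (insert et (P.image e')).card ≤ 1 + P.card := by
        refine le_trans (Finset.card_insert_le _ _) ?_
        have := Finset.card_image_le (s := P) (f := e')
        omega
      have h2 : (Finset.Icc 1 k).card = k := by simp
      have h3 : (Finset.Icc 1 k).card - (insert et (P.image e')).card ≤ A.card := by
        rw [hAdef]
        exact Finset.le_card_sdiff _ _
      have h4 : W.card + P.card = X'.card := by
        rw [hWdef]
        have := Finset.card_sdiff_of_subset hPX'
        have := Finset.card_le_card hPX'
        omega
      omega
    obtain ⟨g, hginj, hgA⟩ := exists_injOn_finset W A hWA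
    have hgIcc : ∀ x ∈ W, g x ∈ Finset.Icc 1 k := fun x hx =>
      (Finset.mem_sdiff.mp (hgA x hx)).1
    have hgne : ∀ x ∈ W, g x ∉ insert et (P.image e') := fun x hx =>
      (Finset.mem_sdiff.mp (hgA x hx)).2
    -- the assignment
    have htri : ∀ x ∈ X, x = s₁ ∨ x ∈ W ∨ x ∈ P := by
      intro x hx
      by_cases hxs : x = s₁
      · exact Or.inl hxs
      · right
        have hxX' : x ∈ X' := Finset.mem_erase.mpr ⟨hxs, hx⟩
        by_cases hxW : x ∈ W
        · exact Or.inl hxW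
        · right
          by_contra hxP
          exact hxW (Finset.mem_sdiff.mpr ⟨hxX', hxP⟩)
    have hWne : ∀ x ∈ W, x ≠ s₁ := fun x hx => Finset.ne_of_mem_erase (hWX' hx)
    have hPne : ∀ x ∈ P, x ≠ s₁ := fun x hx => Finset.ne_of_mem_erase (hPX' hx)
    have hPnW : ∀ x ∈ P, x ∉ W := fun x hx hxW => (Finset.mem_sdiff.mp hxW).2 hx
    set efun : Fin ℓ → ℕ := fun x => if x = s₁ then et else if x ∈ W then g x else e' x
      with hefun
    have hvS : efun s₁ = et := by rw [hefun]; dsimp only; rw [if_pos rfl]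
    have hvW : ∀ x ∈ W, efun x = g x := by
      intro x hx
      rw [hefun]; dsimp only; rw [if_neg (hWne x hx), if_pos hx]
    have hvP : ∀ x ∈ P, efun x = e' x := by
      intro x hx
      rw [hefun]; dsimp only; rw [if_neg (hPne x hx), if_neg (hPnW x hx)]
    refine ⟨efun, ?_, ?_, ?_⟩
    · -- injectivity
      intro x hx y hy hxy
      simp only [Finset.mem_coe] at hx hy
      rcases htri x hx with rfl | hxW | hxP <;> rcases htri y hy with rfl | hyW | hyP
      · rfl
      · exfalso
        rw [hvS, hvW y hyW] at hxy
        exact (hgne y hyW) (hxy ▸ Finset.mem_insert_self _ _)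
      · exfalso
        rw [hvS, hvP y hyP] at hxy
        exact hetnotP (hxy ▸ Finset.mem_image_of_mem e' hyP)
      · exfalso
        rw [hvS, hvW x hxW] at hxy
        exact (hgne x hxW) (hxy ▸ Finset.mem_insert_self _ _)
      · rw [hvW x hxW, hvW y hyW] at hxy
        exact hginj (Finset.mem_coe.mpr hxW) (Finset.mem_coe.mpr hyW) hxy
      · exfalso
        rw [hvW x hxW, hvP y hyP] at hxy
        exact (hgne x hxW) (hxy ▸ Finset.mem_insert_of_mem (Finset.mem_image_of_mem e' hyP))
      · exfalso
        rw [hvS, hvP x hxP] at hxy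
        exact hetnotP (hxy ▸ Finset.mem_image_of_mem e' hxP)
      · exfalso
        rw [hvW y hyW, hvP x hxP] at hxy
        exact (hgne y hyW) (hxy ▸ Finset.mem_insert_of_mem (Finset.mem_image_of_mem e' hxP))
      · rw [hvP x hxP, hvP y hyP] at hxy
        exact he'inj (Finset.mem_coe.mpr (hPY hxP)) (Finset.mem_coe.mpr (hPY hyP)) hxy
    · -- bounds
      intro x hx
      rcases htri x hx with rfl | hxW | hxP
      · rw [hvS]; exact hetIcc
      · rw [hvW x hxW]; exact hgIcc x hxW
      · rw [hvP x hxP]; exact he'mem x (hPY hxP)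
    · -- cardinality bound
      have hsumY : ∑ y ∈ Y, (β' y + e' y).choose (e' y)
          = ∑ y ∈ Y \ P, (b + e' y).choose (e' y)
            + ∑ y ∈ P, (β y + e' y).choose (e' y) := by
        rw [← Finset.sum_sdiff hPY]
        congr 1
        · refine Finset.sum_congr rfl (fun y hy => ?_)
          rw [hβ'Q y (Finset.sdiff_subset hy) (Finset.mem_sdiff.mp hy).2]
        · refine Finset.sum_congr rfl (fun y hy => ?_)
          rw [hβ'P y hy]
      have hsumX : ∑ x ∈ X, (β x + efun x).choose (efun x)
          = (b + 1 + et).choose et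
            + (∑ x ∈ W, (β x + g x).choose (g x)
              + ∑ x ∈ P, (β x + e' x).choose (e' x)) := by
        conv_lhs => rw [hXsplit]
        rw [Finset.sum_insert hs₁X']
        congr 1
        · rw [hvS, hb]
        · rw [← Finset.sum_sdiff hPX', ← hWdef]
          congr 1
          · refine Finset.sum_congr rfl (fun x hx => ?_)
            rw [hvW x hx]
          · refine Finset.sum_congr rfl (fun x hx => ?_)
            rw [hvP x hx]
      rw [hsumX]
      refine le_trans hcard1 ?_
      refine le_trans (Nat.add_le_add_left he'card 1) ?_
      rw [hsumY, ← Nat.add_assoc]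
      refine le_trans (Nat.add_le_add_right hkey _) ?_
      omega

end CountDev

section FinalDev

variable {ℓ : ℕ} {H : Fin ℓ → Set V} {G : SimpleGraph V} {k : ℕ}

lemma Rv_card_le (hw : WidthLE G H k) (v : V) (r : ℕ) (t₀ : Fin ℓ) :
    (Rv G H v r t₀).card ≤ (r + k).choose k := by
  classical
  rcases Nat.eq_zero_or_pos k with rfl | hk
  · have hLv : ∀ t : Fin ℓ, Lv G H v t = ∅ := fun t =>
      Finset.card_eq_zero.mp (Nat.le_zero.mp (Lv_card hw v t))
    have hRv : ∀ (ρ : ℕ) (t : Fin ℓ), Rv G H v ρ t = {t} := by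
      intro ρ
      induction ρ with
      | zero => intro t; rfl
      | succ n ih =>
        intro t
        show insert t ((Lv G H v t).biUnion (Rv G H v n)) = {t}
        rw [hLv t]
        simp
    rw [hRv]
    simp
  · obtain ⟨e, _, hmem, hcard⟩ := count_aux hw v ℓ {t₀}
      (fun x _ => x.isLt) (by rw [Finset.card_singleton]; exact hk)
      (by intro x hx y hy hxy
          rw [Finset.mem_singleton] at hx hy
          subst hx; subst hy; exact absurd hxy (lt_irrefl _))
      (fun _ => r)
    rw [Finset.singleton_biUnion, Finset.sum_singleton] at hcard
    refine hcard.trans ?_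
    have h1 := hmem t₀ (Finset.mem_singleton_self t₀)
    rw [Finset.mem_Icc] at h1
    calc (r + e t₀).choose (e t₀) = (r + e t₀).choose r := Nat.choose_symm_add.symm
      _ ≤ (r + k).choose r := Nat.choose_le_choose r (by omega)
      _ = (r + k).choose k := Nat.choose_symm_add

lemma records (hdec : IsDecomp H) (v : V) :
    ∀ {x u : V} (p : G.Walk x u) (m : Fin ℓ),
      (∀ w ∈ p.support, pidx hdec u ≤ pidx hdec w) →
      pidx hdec u ≤ m →
      (∃ q : G.Walk v x, ∀ w ∈ q.support, w ∉ before H m) →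
      pidx hdec u ∈ Rv G H v p.length m := by
  intro x u p
  induction p with
  | nil =>
    intro m hsup hum hq
    obtain ⟨q, hqav⟩ := hq
    have hx := hqav _ q.end_mem_support
    rw [mem_before_iff hdec] at hx
    rw [le_antisymm hum (not_lt.mp hx)]
    exact self_mem_Rv _ _
  | @cons x y u' hadj q ih =>
    intro m hsup hum hq
    obtain ⟨q₀, hq₀⟩ := hq
    have hsupq : ∀ w ∈ q.support, pidx hdec u' ≤ pidx hdec w := by
      intro w hw
      exact hsup w (by rw [Walk.support_cons]; exact List.mem_cons_of_mem _ hw)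
    by_cases hy : m ≤ pidx hdec y
    · have hynb : y ∉ before H m := by
        rw [mem_before_iff hdec]
        exact not_lt.mpr hy
      have hpre : ∃ q' : G.Walk v y, ∀ w ∈ q'.support, w ∉ before H m := by
        refine ⟨q₀.concat hadj, ?_⟩
        intro w hw
        rw [Walk.support_concat, List.mem_append] at hw
        rcases hw with hw | hw
        · exact hq₀ w hw
        · rw [List.mem_singleton] at hw; subst hw; exact hynb
      have := ih m hsupq hum hpre
      exact Rv_succ_mono _ _ this
    · push_neg at hy
      set t' := pidx hdec y with ht'
      have hxD : x ∈ Dset G H v m := ⟨q₀, hq₀⟩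
      have htLv : t' ∈ Lv G H v m :=
        mem_Lv hy ⟨y, mem_pidx hdec y, x, hxD, hadj.symm⟩
      have hut' : pidx hdec u' ≤ t' := hsup y (by rw [Walk.support_cons]; exact List.mem_cons_of_mem _ q.start_mem_support)
      have hpre : ∃ q' : G.Walk v y, ∀ w ∈ q'.support, w ∉ before H t' := by
        refine ⟨q₀.concat hadj, ?_⟩
        intro w hw
        rw [Walk.support_concat, List.mem_append] at hw
        rcases hw with hw | hw
        · exact fun hbef => hq₀ w hw (before_mono (le_of_lt hy) hbef)
        · rw [List.mem_singleton] at hw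
          subst hw
          rw [mem_before_iff hdec]
          exact lt_irrefl _
      have := ih t' hsupq hut' hpre
      exact Rv_step _ htLv this

/-- linear order refining the part order -/
noncomputable def POrd (hdec : IsDecomp H) : LinearOrder V :=
  LinearOrder.lift'
    (fun v => toLex ((pidx hdec v, Fintype.equivFin V v) : Fin ℓ × Fin (Fintype.card V)))
    (fun a b hab => by
      have h2 : Fintype.equivFin V a = Fintype.equivFin V b := by
        have := congrArg (fun p => (ofLex p).2) hab
        exact this
      exact (Fintype.equivFin V).injective h2)

lemma POrd_le (hdec : IsDecomp H) {u w : V} (h : (POrd hdec).le u w) :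
    pidx hdec u ≤ pidx hdec w := by
  have h' : toLex ((pidx hdec u, Fintype.equivFin V u) : Fin ℓ × Fin (Fintype.card V))
      ≤ toLex ((pidx hdec w, Fintype.equivFin V w) : Fin ℓ × Fin (Fintype.card V)) := h
  rcases (Prod.Lex.le_iff).mp h' with h1 | ⟨h1, _⟩
  · exact le_of_lt h1
  · exact le_of_eq h1

end FinalDev

/-- **Lemma (connected flat decompositions bound wcol_r).** If `G` admits a
connected `f`-flat decomposition of width `k`, then
`wcol_r(G) ≤ C(r+k,k)·f(r)`. -/
theorem wcol_le_of_connected_flat_decomp (G : SimpleGraph V) (f : ℕ → ℕ) (k : ℕ)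
    {ℓ : ℕ} (H : Fin ℓ → Set V)
    (hdec : IsDecomp H) (hconn : IsConnectedDecomp G H)
    (hflat : IsFlat G H f) (hw : WidthLE G H k) (r : ℕ) :
    wcol G r ≤ (r + k).choose k * f r := by
  classical
  apply Nat.sInf_le
  refine ⟨POrd hdec, ?_⟩
  intro v
  set L := POrd hdec with hL
  set t₀ := pidx hdec v with ht₀
  set s := Rv G H v r t₀ with hs
  set F : Fin ℓ → Set V := fun j =>
    {u | u ∈ H j ∧ ∃ p : G.Walk v u, p.length ≤ r ∧ ∀ w ∈ p.support, w ∉ before H j}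
    with hF
  have hvnb : ∀ j ∈ s, v ∉ before H j := by
    intro j hj hbef
    rw [mem_before_iff hdec] at hbef
    exact absurd (Rv_le r t₀ j hj) (not_le.mpr hbef)
  have hsub : WReach G L r v ⊆ ↑(s.biUnion fun j => (F j).toFinset) := by
    intro u hu
    obtain ⟨p, hpath, hlen, hmin⟩ := hu
    have hidx : ∀ w ∈ p.support, pidx hdec u ≤ pidx hdec w := fun w hw =>
      POrd_le hdec (hmin w hw)
    have havoid : ∀ w ∈ p.support, w ∉ before H (pidx hdec u) := by
      intro w hw hbef
      rw [mem_before_iff hdec] at hbef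
      exact absurd (hidx w hw) (not_le.mpr hbef)
    have hmem : pidx hdec u ∈ s := by
      rw [hs]
      refine Rv_mono hlen t₀ ?_
      refine records hdec v p t₀ hidx (hidx v p.start_mem_support) ?_
      refine ⟨Walk.nil, ?_⟩
      intro w hw
      rw [Walk.support_nil, List.mem_singleton] at hw
      subst hw
      rw [mem_before_iff hdec, ht₀]
      exact lt_irrefl _
    rw [Finset.mem_coe, Finset.mem_biUnion]
    refine ⟨pidx hdec u, hmem, ?_⟩
    rw [Set.mem_toFinset]
    exact ⟨mem_pidx hdec u, p, hlen, havoid⟩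
  calc (WReach G L r v).ncard
      ≤ (↑(s.biUnion fun j => (F j).toFinset) : Set V).ncard :=
        Set.ncard_le_ncard hsub (Set.toFinite _)
    _ = (s.biUnion fun j => (F j).toFinset).card := Set.ncard_coe_finset _
    _ ≤ ∑ j ∈ s, ((F j).toFinset).card := Finset.card_biUnion_le
    _ ≤ ∑ _j ∈ s, f r := by
        refine Finset.sum_le_sum ?_
        intro j hj
        have h2 : ((F j).toFinset).card = (F j).ncard :=
          (Set.ncard_eq_toFinset_card' (F j)).symm
        rw [h2]
        exact hflat j r v (hvnb j hj)
    _ = s.card * f r := by rw [Finset.sum_const, smul_eq_mul]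
    _ ≤ (r + k).choose k * f r := Nat.mul_le_mul_right _ (Rv_card_le hw v r t₀)
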